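/- Let t be a natural number, U a nonempty finite multiset of real numbers, and B a finite multiset of real numbers with card B ≤ t, and set N = U + B with card N ≥ t + 1. Then every element of the multiset obtained from N by deleting its t largest elements (with multiplicity) is at most max U; symmetrically, every element of the multiset obtained from N by deleting its t smallest elements (with multiplicity) is at least min U. -/

import Mathlib

open Multiset

/-- The minimum element of a (nonempty, finite) multiset of reals. -/
noncomputable def mmin (V : Multiset ℝ) : ℝ := sInf {x : ℝ | x ∈ V}

/-- The maximum element of a (nonempty, finite) multiset of reals. -/
noncomputable def mmax (V : Multiset ℝ) : ℝ := sSup {x : ℝ | x ∈ V}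

/-- The multiset obtained from `N` by deleting its `t` smallest and `t` largest
elements (counted with multiplicity). -/
noncomputable def trim (t : ℕ) (N : Multiset ℝ) : Multiset ℝ :=
  (((N.sort (· ≤ ·)).drop t).take (Multiset.card N - 2 * t) : List ℝ)

/-- The arithmetic mean of a (nonempty) finite multiset of reals. -/
noncomputable def mean (R : Multiset ℝ) : ℝ := R.sum / (Multiset.card R : ℝ)

/-- Deleting the `t` largest elements of `U + B` (with `card B ≤ t`) leaves
only elements at most `max U`; symmetrically, deleting the `t` smallest leaves
only elements at least `min U`. Here the sorted list of `N` is ascending, so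
dropping the `t` largest is taking the first `card N - t` entries, and
dropping the `t` smallest is dropping the first `t` entries. -/
theorem trim_sides_bound (t : ℕ) (U B : Multiset ℝ)
    (hU : U ≠ 0) (hB : Multiset.card B ≤ t)
    (hN : t + 1 ≤ Multiset.card (U + B)) :
    (∀ x ∈ ((((U + B).sort (· ≤ ·)).take (Multiset.card (U + B) - t) : List ℝ) :
        Multiset ℝ), x ≤ mmax U) ∧
    (∀ x ∈ ((((U + B).sort (· ≤ ·)).drop t : List ℝ) : Multiset ℝ),
        mmin U ≤ x) := by
  classical
  set N := U + B with hNdef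
  set l := N.sort (· ≤ ·) with hl
  have hsort : l.Pairwise (· ≤ ·) := N.pairwise_sort _
  have hlen : l.length = Multiset.card N := N.length_sort _
  have hcoe : (l : Multiset ℝ) = N := N.sort_eq _
  have hle_max : ∀ x ∈ U, x ≤ mmax U := fun x hx =>
    le_csSup (Multiset.finite_toSet U).bddAbove hx
  have hmin_le : ∀ x ∈ U, mmin U ≤ x := fun x hx =>
    csInf_le (Multiset.finite_toSet U).bddBelow hx
  have htN : t ≤ Multiset.card N := le_trans (Nat.le_succ t) hN
  constructor
  · intro x hx
    rw [Multiset.mem_coe] at hx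
    by_contra hgt
    push_neg at hgt
    set p : ℝ → Prop := fun y => mmax U < y with hp
    have hNcount : N.countP p ≤ t := by
      rw [hNdef, Multiset.countP_add]
      have hUzero : U.countP p = 0 := by
        rw [Multiset.countP_eq_zero]
        intro a ha
        exact not_lt.mpr (hle_max a ha)
      calc U.countP p + B.countP p = B.countP p := by rw [hUzero]; ring
        _ ≤ Multiset.card B := Multiset.countP_le_card _ _
        _ ≤ t := hB
    set k := Multiset.card N - t with hk
    have hsplit : l = l.take k ++ l.drop k := (List.take_append_drop k l).symm
    have hpair : ∀ a ∈ l.take k, ∀ b ∈ l.drop k, a ≤ b := by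
      have h := hsort
      rw [hsplit, List.pairwise_append] at h
      exact h.2.2
    have hdroplen : (l.drop k).length = t := by
      rw [List.length_drop, hlen, hk]
      omega
    have hcount1 : 1 ≤ (l.take k).countP (fun y => decide (p y)) := by
      rw [Nat.one_le_iff_ne_zero, ← Nat.pos_iff_ne_zero, List.countP_pos_iff]
      exact ⟨x, hx, by simpa [hp] using hgt⟩
    have hcount2 : (l.drop k).countP (fun y => decide (p y)) = t := by
      rw [List.countP_eq_length.mpr, hdroplen]
      intro b hb
      have := hpair x hx b hb
      simp only [hp, decide_eq_true_eq]
      exact lt_of_lt_of_le hgt this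
    have hlcount : l.countP (fun y => decide (p y)) = N.countP p := by
      rw [← hcoe, Multiset.coe_countP]
    have : t + 1 ≤ N.countP p := by
      rw [← hlcount]
      calc t + 1 = 1 + t := by ring
        _ ≤ (l.take k).countP (fun y => decide (p y)) +
            (l.drop k).countP (fun y => decide (p y)) := by
              rw [hcount2]; exact Nat.add_le_add_right hcount1 t
        _ = l.countP (fun y => decide (p y)) := by
              rw [← List.countP_append, ← hsplit]
    omega
  · intro x hx
    rw [Multiset.mem_coe] at hx
    by_contra hlt
    push_neg at hlt
    set p : ℝ → Prop := fun y => y < mmin U with hp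
    have hNcount : N.countP p ≤ t := by
      rw [hNdef, Multiset.countP_add]
      have hUzero : U.countP p = 0 := by
        rw [Multiset.countP_eq_zero]
        intro a ha
        exact not_lt.mpr (hmin_le a ha)
      calc U.countP p + B.countP p = B.countP p := by rw [hUzero]; ring
        _ ≤ Multiset.card B := Multiset.countP_le_card _ _
        _ ≤ t := hB
    have hsplit : l = l.take t ++ l.drop t := (List.take_append_drop t l).symm
    have hpair : ∀ a ∈ l.take t, ∀ b ∈ l.drop t, a ≤ b := by
      have h := hsort
      rw [hsplit, List.pairwise_append] at h
      exact h.2.2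
    have htakelen : (l.take t).length = t := by
      rw [List.length_take, hlen]
      omega
    have hcount1 : 1 ≤ (l.drop t).countP (fun y => decide (p y)) := by
      rw [Nat.one_le_iff_ne_zero, ← Nat.pos_iff_ne_zero, List.countP_pos_iff]
      exact ⟨x, hx, by simpa [hp] using hlt⟩
    have hcount2 : (l.take t).countP (fun y => decide (p y)) = t := by
      rw [List.countP_eq_length.mpr, htakelen]
      intro a ha
      have := hpair a ha x hx
      simp only [hp, decide_eq_true_eq]
      exact lt_of_le_of_lt this hlt
    have hlcount : l.countP (fun y => decide (p y)) = N.countP p := by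
      rw [← hcoe, Multiset.coe_countP]
    have : t + 1 ≤ N.countP p := by
      rw [← hlcount]
      calc t + 1 ≤ (l.take t).countP (fun y => decide (p y)) +
            (l.drop t).countP (fun y => decide (p y)) := by
              rw [hcount2]; exact Nat.add_le_add_left hcount1 t
        _ = l.countP (fun y => decide (p y)) := by
              rw [← List.countP_append, ← hsplit]
    omega
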